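/- For every n ≥ 1 and every λ with 0 ≤ λ ≤ 2, the 2n-dimensional Lebesgue measure of the region Ψ(λ) = {(a, b) ∈ ℝⁿ × ℝⁿ : |a| ≤ 1, |b| ≤ 1, |a − b| ≤ λ} equals (2πⁿ / (n Γ(n/2) Γ((n+1)/2) Γ(1/2))) · [ λⁿ · B_{1−λ²/4}((n+1)/2, 1/2) + 2ⁿ · B_{λ²/4}((n+1)/2, (n+1)/2) ]. -/

import Mathlib

open MeasureTheory Metric Filter Topology Real

/-- The incomplete Beta function `B_x(a, b) = ∫₀ˣ t^(a-1) (1-t)^(b-1) dt`. -/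
noncomputable def incBeta (x a b : ℝ) : ℝ :=
  ∫ t in (0 : ℝ)..x, t ^ (a - 1) * (1 - t) ^ (b - 1)

/-- The (complete) Beta function `B(a, b) = Γ(a)Γ(b)/Γ(a+b)`. -/
noncomputable def betaFn (a b : ℝ) : ℝ :=
  Real.Gamma a * Real.Gamma b / Real.Gamma (a + b)

/-- The regularized incomplete Beta function `I_x(a, b) = B_x(a,b)/B(a,b)`. -/
noncomputable def regIncBeta (x a b : ℝ) : ℝ :=
  incBeta x a b / betaFn a b

open Set

noncomputable def phiFn (m : ℕ) (r : ℝ) : ℝ :=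
  ∫ u in (r/2)..1, (1 - u^2) ^ ((m:ℝ)/2)

lemma cont_rpow_half (m : ℕ) {b : ℝ → ℝ} (hb : Continuous b) :
    Continuous fun x => (b x) ^ ((m:ℝ)/2) := by
  rcases Nat.eq_zero_or_pos m with hm | hm
  · subst hm; simpa using continuous_const
  · rw [continuous_iff_continuousAt]
    intro x
    exact (Real.continuousAt_rpow_const _ _ (Or.inr (by positivity))).comp hb.continuousAt

lemma contf (m : ℕ) : Continuous fun u : ℝ => (1 - u^2) ^ ((m:ℝ)/2) :=
  cont_rpow_half m (by continuity)

lemma hasDerivAt_phiFn (m : ℕ) (r : ℝ) :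
    HasDerivAt (phiFn m) (-(1/2) * (1 - (r/2)^2) ^ ((m:ℝ)/2)) r := by
  have hf := contf m
  have heq : phiFn m = fun r =>
      (∫ u in (0:ℝ)..1, (1 - u^2) ^ ((m:ℝ)/2))
        - ∫ u in (0:ℝ)..(r/2), (1 - u^2) ^ ((m:ℝ)/2) := by
    funext r
    rw [phiFn, ← intervalIntegral.integral_interval_sub_left
      (hf.intervalIntegrable _ _) (hf.intervalIntegrable _ _)]
  rw [heq]
  have hG : HasDerivAt (fun x => ∫ u in (0:ℝ)..x, (1 - u^2) ^ ((m:ℝ)/2))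
      ((1 - (r/2)^2) ^ ((m:ℝ)/2)) (r/2) := (hf.integral_hasStrictDerivAt 0 (r/2)).hasDerivAt
  have h2 : HasDerivAt (fun x : ℝ => x/2) (1/2) r := by
    simpa using (hasDerivAt_id r).div_const 2
  have := (hG.comp r h2).const_sub (∫ u in (0:ℝ)..1, (1 - u^2) ^ ((m:ℝ)/2))
  exact this.congr_deriv (by ring)

lemma continuous_phiFn (m : ℕ) : Continuous (phiFn m) :=
  continuous_iff_continuousAt.2 fun r => (hasDerivAt_phiFn m r).continuousAt

lemma phiFn_nonneg (m : ℕ) {r : ℝ} (h0 : 0 ≤ r) (h2 : r ≤ 2) : 0 ≤ phiFn m r := by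
  apply intervalIntegral.integral_nonneg (by linarith)
  intro u hu
  have h1 : 0 ≤ 1 - u^2 := by nlinarith [hu.1, hu.2]
  positivity

noncomputable def Cml (m : ℕ) : ℝ := Real.sqrt π ^ m / Real.Gamma ((m:ℝ)/2 + 1)

lemma Cml_pos (m : ℕ) : 0 < Cml m := by
  have : 0 < Real.Gamma ((m:ℝ)/2 + 1) := Real.Gamma_pos_of_pos (by positivity)
  have h2 : (0:ℝ) < Real.sqrt π ^ m := by
    have := Real.pi_pos
    positivity
  exact div_pos h2 this

lemma volume_pi_quadric (m : ℕ) {w : ℝ} (hw : 0 ≤ w) :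
    volume {y : Fin m → ℝ | ∑ j, y j ^ 2 ≤ w} = ENNReal.ofReal (w ^ ((m:ℝ)/2) * Cml m) := by
  rcases Nat.eq_zero_or_pos m with hm | hm
  · subst hm
    have h1 : {y : Fin 0 → ℝ | ∑ j, y j ^ 2 ≤ w} = Set.univ := by
      ext y; simp [hw]
    rw [h1, Cml]
    rw [volume_pi, Measure.pi_univ]
    simp [Real.Gamma_one, Real.rpow_zero]
  · haveI : Nonempty (Fin m) := Fin.pos_iff_nonempty.mp hm
    have hmp := (EuclideanSpace.volume_preserving_symm_measurableEquiv_toLp (Fin m))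
    have hmeas : MeasurableSet {y : Fin m → ℝ | ∑ j, y j ^ 2 ≤ w} :=
      measurableSet_le (by fun_prop) measurable_const
    have hkey := hmp.measure_preimage hmeas.nullMeasurableSet
    have hpre : (MeasurableEquiv.toLp 2 (Fin m → ℝ)).symm ⁻¹' {y : Fin m → ℝ | ∑ j, y j ^ 2 ≤ w}
        = Metric.closedBall (0 : EuclideanSpace ℝ (Fin m)) (Real.sqrt w) := by
      ext z
      simp only [Set.mem_preimage, Set.mem_setOf_eq, Metric.mem_closedBall, dist_zero_right]
      have hz : (MeasurableEquiv.toLp 2 (Fin m → ℝ)).symm z = fun j => z j := rfl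
      rw [hz, EuclideanSpace.norm_eq]
      simp_rw [Real.norm_eq_abs, sq_abs]
      exact (Real.sqrt_le_sqrt_iff hw).symm
    rw [← hkey, hpre, EuclideanSpace.volume_closedBall]
    have hsq : (0:ℝ) ≤ Real.sqrt w := Real.sqrt_nonneg w
    have hGpos : 0 < Real.Gamma ((m:ℝ)/2 + 1) := Real.Gamma_pos_of_pos (by positivity)
    have hπ := Real.pi_pos
    rw [← ENNReal.ofReal_pow hsq, ← ENNReal.ofReal_mul (by positivity)]
    congr 1
    · simp only [Fintype.card_fin]
      rw [Cml]
      congr 1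
      rw [← Real.rpow_natCast (Real.sqrt w) m, Real.sqrt_eq_rpow, ← Real.rpow_mul hw]
      ring_nf

lemma volume_slab (m : ℕ) {r : ℝ} (h0 : 0 ≤ r) (h2 : r ≤ 2) :
    volume {p : ℝ × (Fin m → ℝ) |
        p.1^2 + ∑ j, p.2 j ^ 2 ≤ 1 ∧ (p.1 + r)^2 + ∑ j, p.2 j ^ 2 ≤ 1} =
      ENNReal.ofReal (Cml m * (2 * phiFn m r)) := by
  set q : ℝ := (m:ℝ)/2 with hq
  set w : ℝ → ℝ := fun s => min (1 - s^2) (1 - (s+r)^2) with hw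
  have hwcont : Continuous w := by fun_prop
  have hQ : Measurable fun p : ℝ × (Fin m → ℝ) => ∑ j, p.2 j ^ 2 :=
    Finset.measurable_sum _ fun j _ => ((measurable_pi_apply j).comp measurable_snd).pow_const 2
  have hBmeas : MeasurableSet {p : ℝ × (Fin m → ℝ) |
      p.1^2 + ∑ j, p.2 j ^ 2 ≤ 1 ∧ (p.1 + r)^2 + ∑ j, p.2 j ^ 2 ≤ 1} := by
    apply MeasurableSet.inter
    · exact measurableSet_le ((measurable_fst.pow_const 2).add hQ) measurable_const
    · exact measurableSet_le (((measurable_fst.add_const r).pow_const 2).add hQ) measurable_const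
  rw [Measure.volume_eq_prod, Measure.prod_apply hBmeas]
  have hsec : ∀ s : ℝ, (volume (Prod.mk s ⁻¹' {p : ℝ × (Fin m → ℝ) |
      p.1^2 + ∑ j, p.2 j ^ 2 ≤ 1 ∧ (p.1 + r)^2 + ∑ j, p.2 j ^ 2 ≤ 1})) =
      Set.indicator (Icc (-1) (1-r)) (fun s => ENNReal.ofReal ((w s) ^ q * Cml m)) s := by
    intro s
    have hsec1 : Prod.mk s ⁻¹' {p : ℝ × (Fin m → ℝ) |
        p.1^2 + ∑ j, p.2 j ^ 2 ≤ 1 ∧ (p.1 + r)^2 + ∑ j, p.2 j ^ 2 ≤ 1}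
        = {y : Fin m → ℝ | ∑ j, y j ^ 2 ≤ w s} := by
      ext y
      simp only [Set.mem_preimage, Set.mem_setOf_eq, hw, le_min_iff]
      constructor <;> intro h <;> constructor <;> linarith [h.1, h.2]
    rw [hsec1]
    by_cases hs : s ∈ Icc (-1 : ℝ) (1-r)
    · rw [Set.indicator_of_mem hs]
      have hws : 0 ≤ w s := by
        rcases hs with ⟨hs1, hs2⟩
        simp only [hw, le_min_iff]
        constructor <;> nlinarith
      exact volume_pi_quadric m hws
    · rw [Set.indicator_of_notMem hs]
      have hws : w s < 0 := by
        simp only [Set.mem_Icc, not_and_or, not_le] at hs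
        rcases hs with hs | hs
        · exact lt_of_le_of_lt (min_le_left _ _) (by nlinarith)
        · exact lt_of_le_of_lt (min_le_right _ _) (by nlinarith)
      have : {y : Fin m → ℝ | ∑ j, y j ^ 2 ≤ w s} = ∅ := by
        ext y
        simp only [Set.mem_setOf_eq, Set.mem_empty_iff_false, iff_false, not_le]
        calc w s < 0 := hws
        _ ≤ ∑ j, y j ^ 2 := by positivity
      rw [this]; simp
  simp_rw [hsec]
  rw [lintegral_indicator measurableSet_Icc]
  have hfc : Continuous fun s => (w s) ^ q * Cml m :=
    ((cont_rpow_half m hwcont)).mul continuous_const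
  rw [← MeasureTheory.ofReal_integral_eq_lintegral_ofReal
    (hfc.integrableOn_Icc.integrable)]
  rotate_left
  · filter_upwards [ae_restrict_mem measurableSet_Icc] with s hs
    have hws : 0 ≤ w s := by
      rcases hs with ⟨hs1, hs2⟩
      simp only [hw, le_min_iff]
      constructor <;> nlinarith
    have := Cml_pos m
    positivity
  congr 1
  rw [MeasureTheory.integral_Icc_eq_integral_Ioc,
    ← intervalIntegral.integral_of_le (by linarith : (-1:ℝ) ≤ 1 - r)]
  have hsplit : ∫ s in (-1 : ℝ)..(1-r), (w s) ^ q * Cml m =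
      (∫ s in (-1 : ℝ)..(-r/2), (w s) ^ q * Cml m)
        + ∫ s in (-r/2 : ℝ)..(1-r), (w s) ^ q * Cml m :=
    (intervalIntegral.integral_add_adjacent_intervals
      (hfc.intervalIntegrable _ _) (hfc.intervalIntegrable _ _)).symm
  rw [hsplit]
  have h1 : ∫ s in (-1 : ℝ)..(-r/2), (w s) ^ q * Cml m
      = Cml m * phiFn m r := by
    have hcg : ∀ s ∈ Set.uIcc (-1 : ℝ) (-r/2),
        (w s) ^ q * Cml m = Cml m * (1 - (-s)^2) ^ q := by
      intro s hs
      rw [Set.uIcc_of_le (by linarith)] at hs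
      have hmin : w s = 1 - s^2 := by
        apply min_eq_left
        nlinarith [hs.1, hs.2]
      rw [hmin, neg_sq, mul_comm]
    rw [intervalIntegral.integral_congr hcg,
      intervalIntegral.integral_const_mul,
      intervalIntegral.integral_comp_neg (fun u => (1 - u^2) ^ q)]
    have e1 : -(-r/2) = r/2 := by ring
    have e2 : -(-1 : ℝ) = 1 := by ring
    rw [e1, e2, phiFn]
  have h1' : ∫ s in (-r/2 : ℝ)..(1-r), (w s) ^ q * Cml m
      = Cml m * phiFn m r := by
    have hcg : ∀ s ∈ Set.uIcc (-r/2 : ℝ) (1-r),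
        (w s) ^ q * Cml m = Cml m * (1 - (s+r)^2) ^ q := by
      intro s hs
      rw [Set.uIcc_of_le (by linarith)] at hs
      have hmin : w s = 1 - (s+r)^2 := by
        apply min_eq_right
        nlinarith [hs.1, hs.2]
      rw [hmin, mul_comm]
    rw [intervalIntegral.integral_congr hcg,
      intervalIntegral.integral_const_mul,
      intervalIntegral.integral_comp_add_right (fun u => (1 - u^2) ^ q) r]
    have e1 : -r/2 + r = r/2 := by ring
    have e2 : 1 - r + r = 1 := by ring
    rw [e1, e2, phiFn]
  rw [h1, h1']
  ring

lemma euclid_norm_le_one_iff {k : ℕ} (z : EuclideanSpace ℝ (Fin k)) :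
    ‖z‖ ≤ 1 ↔ ∑ i, z i ^ 2 ≤ 1 := by
  rw [EuclideanSpace.norm_eq]
  simp_rw [Real.norm_eq_abs, sq_abs]
  have h := Real.sqrt_le_sqrt_iff (x := ∑ i, z i ^ 2) zero_le_one
  rwa [Real.sqrt_one] at h

lemma volume_lens (m : ℕ) (c : EuclideanSpace ℝ (Fin (m+1))) (hc : ‖c‖ ≤ 2) :
    volume {b : EuclideanSpace ℝ (Fin (m+1)) | ‖b‖ ≤ 1 ∧ ‖b + c‖ ≤ 1} =
      ENNReal.ofReal (Cml m * (2 * phiFn m ‖c‖)) := by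
  set r : ℝ := ‖c‖ with hrdef
  have hr0 : 0 ≤ r := norm_nonneg c
  set e0 : EuclideanSpace ℝ (Fin (m+1)) := EuclideanSpace.single 0 1 with he0def
  have he0 : ‖e0‖ = 1 := by simp [he0def, EuclideanSpace.norm_single]
  set y : EuclideanSpace ℝ (Fin (m+1)) := r • e0 with hydef
  have hy : ‖c‖ = ‖y‖ := by
    rw [hydef, norm_smul, he0, Real.norm_eq_abs, abs_of_nonneg hr0, mul_one]
  have hmeasset : ∀ v : EuclideanSpace ℝ (Fin (m+1)),
      MeasurableSet {b : EuclideanSpace ℝ (Fin (m+1)) | ‖b‖ ≤ 1 ∧ ‖b + v‖ ≤ 1} := by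
    intro v
    exact ((isClosed_le continuous_norm continuous_const).inter
      (isClosed_le ((continuous_id.add continuous_const).norm) continuous_const)).measurableSet
  -- step A : reduce to c = y
  set f := Submodule.reflection (ℝ ∙ (c - y))ᗮ with hfdef
  have hfc : f c = y := Submodule.reflection_sub hy
  have hstepA : volume {b : EuclideanSpace ℝ (Fin (m+1)) | ‖b‖ ≤ 1 ∧ ‖b + c‖ ≤ 1} =
      volume {b : EuclideanSpace ℝ (Fin (m+1)) | ‖b‖ ≤ 1 ∧ ‖b + y‖ ≤ 1} := by
    have hpre : f ⁻¹' {b : EuclideanSpace ℝ (Fin (m+1)) | ‖b‖ ≤ 1 ∧ ‖b + y‖ ≤ 1}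
        = {b : EuclideanSpace ℝ (Fin (m+1)) | ‖b‖ ≤ 1 ∧ ‖b + c‖ ≤ 1} := by
      ext b
      simp only [Set.mem_preimage, Set.mem_setOf_eq]
      rw [f.norm_map, ← hfc, ← map_add, f.norm_map]
    rw [← hpre, (f.measurePreserving).measure_preimage (hmeasset y).nullMeasurableSet]
  rw [hstepA]
  -- step B : transfer to pi space
  set P : Fin (m+1) → ℝ := fun i => if i = 0 then 1 else 0 with hPdef
  set A : Set (Fin (m+1) → ℝ) :=
    {x | ∑ i, x i ^ 2 ≤ 1 ∧ ∑ i, (x i + r * P i) ^ 2 ≤ 1} with hAdef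
  have hAmeas : MeasurableSet A := by
    apply MeasurableSet.inter
    · exact measurableSet_le (Finset.measurable_sum _ fun i _ =>
        (measurable_pi_apply i).pow_const 2) measurable_const
    · exact measurableSet_le (Finset.measurable_sum _ fun i _ =>
        ((measurable_pi_apply i).add_const _).pow_const 2) measurable_const
  have hstepB : volume {b : EuclideanSpace ℝ (Fin (m+1)) | ‖b‖ ≤ 1 ∧ ‖b + y‖ ≤ 1} = volume A := by
    have hpre : (MeasurableEquiv.toLp 2 (Fin (m+1) → ℝ)).symm ⁻¹' A
        = {b : EuclideanSpace ℝ (Fin (m+1)) | ‖b‖ ≤ 1 ∧ ‖b + y‖ ≤ 1} := by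
      ext b
      simp only [Set.mem_preimage, hAdef, Set.mem_setOf_eq]
      have hb : ∀ i, (MeasurableEquiv.toLp 2 (Fin (m+1) → ℝ)).symm b i = b i := fun i => rfl
      have hby : ∀ i, b i + r * P i = (b + y) i := by
        intro i
        rw [hydef, hPdef]
        simp only [PiLp.add_apply, PiLp.smul_apply, he0def, EuclideanSpace.single_apply,
          smul_eq_mul]
      simp_rw [hb, hby]
      rw [euclid_norm_le_one_iff, euclid_norm_le_one_iff]
    rw [← hpre, (EuclideanSpace.volume_preserving_symm_measurableEquiv_toLp
      (Fin (m+1))).measure_preimage hAmeas.nullMeasurableSet]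
  rw [hstepB]
  -- step C : split off the first coordinate
  have hpp := ((volume_preserving_piFinSuccAbove (fun _ : Fin (m+1) => ℝ) 0).symm)
  have hpre : (MeasurableEquiv.piFinSuccAbove (fun _ : Fin (m+1) => ℝ) 0).symm ⁻¹' A =
      {p : ℝ × (Fin m → ℝ) |
        p.1^2 + ∑ j, p.2 j ^ 2 ≤ 1 ∧ (p.1 + r)^2 + ∑ j, p.2 j ^ 2 ≤ 1} := by
    ext p
    obtain ⟨s, v⟩ := p
    simp only [Set.mem_preimage, hAdef, Set.mem_setOf_eq, MeasurableEquiv.piFinSuccAbove,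
      MeasurableEquiv.symm_mk, MeasurableEquiv.coe_mk, Equiv.symm_symm, Fin.insertNthEquiv_apply,
      Fin.insertNth_zero']
    simp [Fin.sum_univ_succ, hPdef, Fin.succ_ne_zero]
  rw [← hpp.measure_preimage hAmeas.nullMeasurableSet, hpre]
  exact volume_slab m hr0 hc

lemma sq_rpow_half (m : ℕ) {x : ℝ} (hx : 0 ≤ x) : (x^2) ^ ((m:ℝ)/2) = x^m := by
  rw [← Real.rpow_natCast x 2, ← Real.rpow_mul hx, ← Real.rpow_natCast x m]
  congr 1
  push_cast
  ring

lemma two_phi_eq (m : ℕ) {lam : ℝ} (h0 : 0 < lam) (h2 : lam ≤ 2) :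
    2 * phiFn m lam = incBeta (1 - lam^2/4) ((m:ℝ)/2 + 1) (1/2) := by
  set q : ℝ := (m:ℝ)/2 with hq
  set g : ℝ → ℝ := fun t => t ^ q * (1 - t) ^ (-(1/2) : ℝ) with hg
  have hfim : ∀ u ∈ Set.uIcc (lam/2) 1, (1 - u^2) ∈ Set.Icc (0:ℝ) (1 - lam^2/4) := by
    intro u hu
    rw [Set.uIcc_of_le (by linarith)] at hu
    constructor <;> nlinarith [hu.1, hu.2]
  have hgc : ContinuousOn g ((fun u => 1 - u^2) '' Set.uIcc (lam/2) 1) := by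
    apply ContinuousOn.mono (s := Set.Icc (0:ℝ) (1 - lam^2/4))
    · intro t ht
      apply ContinuousAt.continuousWithinAt
      apply ContinuousAt.mul
      · exact (cont_rpow_half m continuous_id).continuousAt
      · apply ContinuousAt.rpow_const
        · exact continuousAt_const.sub continuousAt_id
        · left
          have := ht.2
          have h4 : lam^2/4 > 0 := by positivity
          intro hcontra
          nlinarith [sub_eq_zero.mp hcontra]
    · rintro t ⟨u, hu, rfl⟩
      exact hfim u hu
  have hsub := intervalIntegral.integral_comp_smul_deriv''
    (f := fun u => 1 - u^2) (f' := fun u => -2*u) (g := g) (a := lam/2) (b := 1)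
    (by fun_prop) ?_ (by fun_prop) hgc
  · have hLHS : ∫ u in (lam/2)..1, (-2*u) • (g ∘ (fun u => 1 - u^2)) u
        = -2 * phiFn m lam := by
      rw [show -2 * phiFn m lam = ∫ u in (lam/2)..1, -2 * (1-u^2)^q from
        (intervalIntegral.integral_const_mul _ _).symm]
      apply intervalIntegral.integral_congr
      intro u hu
      rw [Set.uIcc_of_le (by linarith)] at hu
      have hu0 : 0 < u := lt_of_lt_of_le (by linarith) hu.1
      simp only [Function.comp, smul_eq_mul, hg]
      rw [show (1 - (1 - u^2)) = u^2 by ring]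
      rw [show ((u^2) ^ (-(1/2):ℝ)) = u⁻¹ by
        rw [← Real.rpow_natCast u 2, ← Real.rpow_mul hu0.le]
        norm_num [Real.rpow_neg_one]]
      field_simp
    rw [hLHS] at hsub
    have hsub2 : -2 * phiFn m lam = ∫ u in (1 - lam^2/4)..(0:ℝ), g u := by
      rw [hsub]
      congr 1 <;> ring_nf
    rw [intervalIntegral.integral_symm] at hsub2
    rw [incBeta]
    have hexp : ∀ t : ℝ, t ^ (q + 1 - 1) * (1-t) ^ ((1:ℝ)/2 - 1) = g t := by
      intro t
      rw [hg]
      have h1 : q + 1 - 1 = q := by ring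
      rw [h1]
      norm_num
    simp_rw [hexp]
    linarith
  · intro x hx
    have : HasDerivAt (fun u : ℝ => 1 - u^2) (-2*x) x := by
      simpa using ((hasDerivAt_pow 2 x).const_sub 1)
    exact this.hasDerivWithinAt

lemma J_eq (m : ℕ) {lam : ℝ} (h0 : 0 ≤ lam) :
    ∫ y in (0:ℝ)..lam, y^(m+1) * (1 - (y/2)^2) ^ ((m:ℝ)/2)
      = 2^(m+1) * incBeta (lam^2/4) ((m:ℝ)/2 + 1) ((m:ℝ)/2 + 1) := by
  set q : ℝ := (m:ℝ)/2 with hq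
  set g : ℝ → ℝ := fun t => t ^ q * (1 - t) ^ q with hg
  have hgc : Continuous g :=
    (cont_rpow_half m continuous_id).mul (cont_rpow_half m (continuous_const.sub continuous_id))
  have hsub := intervalIntegral.integral_comp_smul_deriv
    (f := fun y => y^2/4) (f' := fun y => y/2) (g := g) (a := 0) (b := lam)
    ?_ (by fun_prop) hgc
  · have hexp : ∀ t : ℝ, t ^ (q + 1 - 1) * (1-t) ^ (q + 1 - 1) = g t := by
      intro t
      have h1 : q + 1 - 1 = q := by ring
      rw [h1, hg]
    rw [incBeta]
    simp_rw [hexp]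
    have hb0 : ((0:ℝ)^2/4) = 0 := by norm_num
    rw [hb0] at hsub
    rw [← hsub, ← intervalIntegral.integral_const_mul]
    apply intervalIntegral.integral_congr
    intro y hy
    rw [Set.uIcc_of_le h0] at hy
    have hy0 : 0 ≤ y := hy.1
    simp only [Function.comp, smul_eq_mul, hg]
    have h1 : (y^2/4 : ℝ) = (y/2)^2 := by ring
    rw [h1, sq_rpow_half m (by positivity)]
    have h2 : (1 - (y/2)^2 : ℝ) = 1 - y^2/4 := by ring
    rw [h2]
    rw [show (1 - y^2/4 : ℝ) ^ q = (1 - (y/2)^2) ^ q by rw [← h2]]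
    rw [show (2:ℝ)^(m+1) * (y/2 * ((y/2)^m * (1 - (y/2)^2)^q)) =
        (2^(m+1) * (y/2 * (y/2)^m)) * (1-(y/2)^2)^q by ring,
      show (2:ℝ)^(m+1) * (y/2 * (y/2)^m) = y^(m+1) by
        rw [← pow_succ', ← mul_pow]
        congr 1
        ring]
  · intro x hx
    have : HasDerivAt (fun y : ℝ => y^2/4) (x/2) x := by
      have := (hasDerivAt_pow 2 x).div_const 4
      exact this.congr_deriv (by push_cast; ring)
    exact this

lemma const_eq (m : ℕ) :
    (Real.sqrt π ^ (m+1) / Real.Gamma ((((m:ℕ):ℝ)+1)/2 + 1)) * Cml m =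
      2 * π ^ (m+1) /
        ((((m:ℕ):ℝ)+1) * Real.Gamma ((((m:ℕ):ℝ)+1)/2) * Real.Gamma (((((m:ℕ):ℝ)+1)+1)/2) *
          Real.Gamma (1/2)) := by
  have hπ := Real.pi_pos
  have hM : (0:ℝ) < (m:ℝ) + 1 := by positivity
  have hG1 : Real.Gamma (((m:ℝ)+1)/2 + 1) = (((m:ℝ)+1)/2) * Real.Gamma (((m:ℝ)+1)/2) :=
    Real.Gamma_add_one (by positivity)
  have hG2 : ((m:ℝ)/2 + 1) = (((m:ℝ)+1)+1)/2 := by ring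
  have hGpos1 : 0 < Real.Gamma (((m:ℝ)+1)/2) := Real.Gamma_pos_of_pos (by positivity)
  have hGpos2 : 0 < Real.Gamma ((((m:ℝ)+1)+1)/2) := Real.Gamma_pos_of_pos (by positivity)
  have hsπ : Real.sqrt π * Real.sqrt π = π := Real.mul_self_sqrt hπ.le
  have hpow : Real.sqrt π ^ (m+1) * Real.sqrt π ^ m * Real.sqrt π = π ^ (m+1) := by
    rw [mul_assoc, ← pow_succ, ← pow_add,
      show (m+1)+(m+1) = 2*(m+1) by ring, pow_mul, sq, hsπ]
  rw [Cml, hG1, hG2, Real.Gamma_one_half_eq]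
  have hsqrtπ : (0:ℝ) < Real.sqrt π := Real.sqrt_pos.mpr hπ
  field_simp
  linear_combination hpow

theorem volume_pair_region
    {n : ℕ} (hn : 1 ≤ n) (lam : ℝ) (hlam0 : 0 ≤ lam) (hlam2 : lam ≤ 2) :
    (volume {p : EuclideanSpace ℝ (Fin n) × EuclideanSpace ℝ (Fin n) |
        ‖p.1‖ ≤ 1 ∧ ‖p.2‖ ≤ 1 ∧ ‖p.1 - p.2‖ ≤ lam}).toReal =
      2 * Real.pi ^ n /
        ((n : ℝ) * Real.Gamma ((n : ℝ) / 2) * Real.Gamma (((n : ℝ) + 1) / 2) *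
          Real.Gamma (1 / 2)) *
        (lam ^ n * incBeta (1 - lam ^ 2 / 4) (((n : ℝ) + 1) / 2) (1 / 2) +
          2 ^ n * incBeta (lam ^ 2 / 4) (((n : ℝ) + 1) / 2) (((n : ℝ) + 1) / 2)) := by
  obtain ⟨m, rfl⟩ : ∃ m, n = m + 1 := ⟨n - 1, (Nat.succ_pred_eq_of_pos hn).symm⟩
  set E := EuclideanSpace ℝ (Fin (m+1)) with hE
  set g : ℝ → ℝ := fun t => Cml m * (2 * phiFn m t) with hgdef
  set H : ℝ → ℝ := fun t => if t ≤ lam then g t else 0 with hHdef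
  set S' : Set (E × E) := {q | ‖q.1 + q.2‖ ≤ 1 ∧ ‖q.2‖ ≤ 1 ∧ ‖q.1‖ ≤ lam} with hS'def
  have hS'meas : MeasurableSet S' := by
    apply IsClosed.measurableSet
    exact ((isClosed_le ((continuous_fst.add continuous_snd).norm) continuous_const).inter
      ((isClosed_le continuous_snd.norm continuous_const).inter
        (isClosed_le continuous_fst.norm continuous_const)))
  -- Step 1 : shear
  have h1 : volume {p : E × E | ‖p.1‖ ≤ 1 ∧ ‖p.2‖ ≤ 1 ∧ ‖p.1 - p.2‖ ≤ lam} = volume S' := by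
    have hT := measurePreserving_sub_prod (volume : Measure E) (volume : Measure E)
    have hset : {p : E × E | ‖p.1‖ ≤ 1 ∧ ‖p.2‖ ≤ 1 ∧ ‖p.1 - p.2‖ ≤ lam}
        = (fun p : E × E => (p.1 - p.2, p.2)) ⁻¹' S' := by
      ext p
      simp [hS'def, sub_add_cancel]
    rw [hset, Measure.volume_eq_prod, hT.measure_preimage hS'meas.nullMeasurableSet,
      ← Measure.volume_eq_prod]
  rw [h1]
  -- Step 2 : Fubini
  have h2 : volume S' = ∫⁻ c : E, ENNReal.ofReal (H ‖c‖) := by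
    rw [Measure.volume_eq_prod, Measure.prod_apply hS'meas]
    apply lintegral_congr
    intro c
    by_cases hcl : ‖c‖ ≤ lam
    · have hpre : Prod.mk c ⁻¹' S' = {b : E | ‖b‖ ≤ 1 ∧ ‖b + c‖ ≤ 1} := by
        ext b
        simp only [Set.mem_preimage, hS'def, Set.mem_setOf_eq, add_comm c b]
        tauto
      rw [hpre, volume_lens m c (hcl.trans hlam2), hHdef]
      simp only [hcl, if_true]
      rfl
    · have hpre : Prod.mk c ⁻¹' S' = (∅ : Set E) := by
        ext b
        simp only [Set.mem_preimage, hS'def, Set.mem_setOf_eq, Set.mem_empty_iff_false,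
          iff_false]
        tauto
      rw [hpre, hHdef]
      simp [hcl]
  rw [h2]
  -- Step 3 : to a Bochner integral
  have hgcont : Continuous g := continuous_const.mul (continuous_const.mul (continuous_phiFn m))
  have hHmeas : Measurable H := by
    rw [hHdef]
    exact Measurable.ite measurableSet_Iic hgcont.measurable measurable_const
  have hHnn : ∀ c : E, 0 ≤ H ‖c‖ := by
    intro c
    rw [hHdef]
    dsimp only
    split_ifs with h
    · have := phiFn_nonneg m (norm_nonneg c) (h.trans hlam2)
      have := (Cml_pos m).le
      rw [hgdef]
      positivity
    · exact le_refl 0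
  have h3 : (∫⁻ c : E, ENNReal.ofReal (H ‖c‖)).toReal = ∫ c : E, H ‖c‖ :=
    (integral_eq_lintegral_of_nonneg_ae (Filter.Eventually.of_forall hHnn)
      (hHmeas.comp continuous_norm.measurable).aestronglyMeasurable).symm
  rw [h3]
  -- Step 4 : polar coordinates
  haveI : Nontrivial E := by
    refine nontrivial_of_ne (EuclideanSpace.single (0 : Fin (m+1)) (1:ℝ)) 0 ?_
    intro h
    have h2 : ‖EuclideanSpace.single (0 : Fin (m+1)) (1:ℝ)‖ = 1 := by
      simp [EuclideanSpace.norm_single]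
    rw [h, norm_zero] at h2
    norm_num at h2
  have h4 := integral_fun_norm_addHaar (volume : Measure E) H
  have hfr : Module.finrank ℝ E = m + 1 := finrank_euclideanSpace_fin
  simp only [hfr] at h4
  rw [h4]
  -- volume of the unit ball
  have hωnn : (0:ℝ) ≤ Real.sqrt π ^ (m+1) / Real.Gamma ((((m:ℕ):ℝ)+1)/2 + 1) := by
    have h5 : 0 < Real.Gamma ((((m:ℕ):ℝ)+1)/2 + 1) := Real.Gamma_pos_of_pos (by positivity)
    positivity
  have hω : (volume (ball (0:E) 1)).toReal
      = Real.sqrt π ^ (m+1) / Real.Gamma ((((m:ℕ):ℝ)+1)/2 + 1) := by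
    have hballE : volume (ball (0:E) 1)
        = volume (ball (0 : EuclideanSpace ℝ (Fin (m+1))) 1) := rfl
    rw [hballE, EuclideanSpace.volume_ball]
    simp only [Fintype.card_fin, ENNReal.ofReal_one, one_pow, one_mul]
    rw [ENNReal.toReal_ofReal (by push_cast at hωnn ⊢; exact hωnn)]
    push_cast
    ring
  rw [measureReal_def, hω]
  -- Step 5 : reduce to an interval integral
  have h5 : ∫ y in Set.Ioi (0:ℝ), y ^ (m + 1 - 1) • H y = ∫ y in (0:ℝ)..lam, y^m * g y := by
    have hcg : ∀ y ∈ Set.Ioi (0:ℝ),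
        y ^ (m + 1 - 1) • H y = Set.indicator (Set.Ioc 0 lam) (fun y => y^m * g y) y := by
      intro y hy
      simp only [Nat.add_sub_cancel, smul_eq_mul, hHdef]
      by_cases hyl : y ≤ lam
      · rw [if_pos hyl, Set.indicator_of_mem (Set.mem_Ioc.mpr ⟨hy, hyl⟩)]
      · rw [if_neg hyl, Set.indicator_of_notMem (by simp [Set.mem_Ioc, hyl]), mul_zero]
    rw [setIntegral_congr_fun measurableSet_Ioi hcg,
      MeasureTheory.setIntegral_indicator measurableSet_Ioc,
      Set.inter_eq_self_of_subset_right Set.Ioc_subset_Ioi_self,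
      ← intervalIntegral.integral_of_le hlam0]
  rw [h5]
  rw [nsmul_eq_mul, smul_eq_mul]
  -- pull out the constant Cml m
  have hgpull : ∫ y in (0:ℝ)..lam, y^m * g y
      = Cml m * ∫ y in (0:ℝ)..lam, (2 * phiFn m y) * y^m := by
    rw [← intervalIntegral.integral_const_mul]
    apply intervalIntegral.integral_congr
    intro y _
    rw [hgdef]
    ring
  rw [hgpull]
  -- integration by parts
  have hu : ∀ x ∈ Set.uIcc (0:ℝ) lam,
      HasDerivAt (fun y => 2 * phiFn m y) (-(1 - (x/2)^2) ^ ((m:ℝ)/2)) x := by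
    intro x _
    have h := (hasDerivAt_phiFn m x).const_mul 2
    exact h.congr_deriv (by ring)
  have hv : ∀ x ∈ Set.uIcc (0:ℝ) lam,
      HasDerivAt (fun y : ℝ => y^(m+1)/((m:ℝ)+1)) (x^m) x := by
    intro x _
    have h := (hasDerivAt_pow (m+1) x).div_const ((m:ℝ)+1)
    exact h.congr_deriv (by push_cast; field_simp)
  have hu' : IntervalIntegrable (fun x : ℝ => -(1 - (x/2)^2) ^ ((m:ℝ)/2)) volume 0 lam :=
    (((contf m).comp (continuous_id.div_const 2)).neg).intervalIntegrable _ _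
  have hv' : IntervalIntegrable (fun x : ℝ => x^m) volume 0 lam :=
    (continuous_pow m).intervalIntegrable _ _
  have hparts := intervalIntegral.integral_mul_deriv_eq_deriv_mul hu hv hu' hv'
  have hzero : (2 * phiFn m 0) * ((0:ℝ)^(m+1)/((m:ℝ)+1)) = 0 := by
    rw [zero_pow (Nat.succ_ne_zero m)]
    ring
  rw [hzero, sub_zero] at hparts
  have hlast : ∫ x in (0:ℝ)..lam, (-(1 - (x/2)^2) ^ ((m:ℝ)/2)) * (x^(m+1)/((m:ℝ)+1))
      = (-(1/((m:ℝ)+1))) * ∫ x in (0:ℝ)..lam, x^(m+1) * (1 - (x/2)^2) ^ ((m:ℝ)/2) := by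
    rw [← intervalIntegral.integral_const_mul]
    apply intervalIntegral.integral_congr
    intro x _
    ring
  rw [hlast] at hparts
  rw [J_eq m hlam0] at hparts
  -- split into the degenerate and main case
  rcases eq_or_lt_of_le hlam0 with hlz | hlz
  · subst hlz
    rw [intervalIntegral.integral_same] at hparts ⊢
    simp only [mul_zero]
    have h00 : ((0:ℝ)^2/4) = 0 := by norm_num
    rw [h00]
    simp [incBeta, zero_pow (Nat.succ_ne_zero m)]
  · rw [hparts]
    push_cast
    have harg : (((m:ℝ)+1)+1)/2 = (m:ℝ)/2 + 1 := by ring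
    rw [harg, ← two_phi_eq m hlz hlam2]
    have hconst := const_eq m
    push_cast at hconst
    rw [harg] at hconst
    rw [← hconst]
    have hM : ((m:ℝ)+1) ≠ 0 := by positivity
    field_simp
    ring
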